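/- In a separative valuation algebra over a distributive lattice, composition is exchangeable: if x ≥ y∧z for abstract densities φ,ψ,τ with d(φ)=x, d(ψ)=y, d(τ)=z and the domination conditions δ(π_{x∧y}(ψ)) ≤ δ(π_{x∧y}(φ)), δ(π_{x∧z}(τ)) ≤ δ(π_{x∧z}(φ)) hold, then (φ ▷ ψ) ▷ τ = (φ ▷ τ) ▷ ψ. -/
import Mathlib


/-- A commutative semigroup which is a (disjoint) union of groups:
`e a` is the unit of the group containing `a`, `inv a` its inverse there. -/
structure UnionOfGroups (G : Type*) [CommSemigroup G] where
  e : G → G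
  inv : G → G
  e_idem : ∀ a, e a * e a = e a
  mul_unit : ∀ a, a * e a = a
  mul_inv : ∀ a, a * inv a = e a

/-- A separative valuation algebra `Psi` together with its embedding extension
semigroup `P = Ψ⁰`, a union of disjoint groups.  `e a` is the unit of the group
`δ(a)` containing `a`, `inv a` the group inverse, `d` the labeling, `p` the
projection (total on `Psi` for `x ≤ d a`).  Axioms A1-A5 (with the strong
combination axiom A5') and the separativity conditions S1, S2 are recorded. -/
structure SVA (P : Type*) (D : Type*) [CommSemigroup P] [Lattice D] where
  e : P → P
  inv : P → P
  e_idem : ∀ a, e a * e a = e a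
  mul_unit : ∀ a, a * e a = a
  mul_inv : ∀ a, a * inv a = e a
  e_mul : ∀ a b, e (a * b) = e a * e b
  e_inv : ∀ a, e (inv a) = e a
  d : P → D
  d_mul : ∀ a b, d (a * b) = d a ⊔ d b
  d_inv : ∀ a, d (inv a) = d a
  Psi : Set P
  Psi_mul : ∀ {a b}, a ∈ Psi → b ∈ Psi → a * b ∈ Psi
  p : P → D → P
  p_mem : ∀ {a} (x : D), a ∈ Psi → x ≤ d a → p a x ∈ Psi
  d_p : ∀ {a} (x : D), a ∈ Psi → x ≤ d a → d (p a x) = x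
  p_self : ∀ {a}, a ∈ Psi → p a (d a) = a
  p_trans : ∀ {a} (x y : D), a ∈ Psi → x ≤ y → y ≤ d a → p (p a y) x = p a x
  strong_comb : ∀ {a b} (z : D), a ∈ Psi → b ∈ Psi → d a ≤ z → z ≤ d a ⊔ d b →
    p (a * b) z = a * p b (z ⊓ d b)
  sep : ∀ {a} (x : D), a ∈ Psi → x ≤ d a → e (a * p a x) = e a

namespace SVA

variable {P : Type*} {D : Type*} [CommSemigroup P] [Lattice D]

/-- The domination order between the groups: `δ(a) ≤ δ(b)` iff `f_a · f_b = f_b`. -/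
def domLe (V : SVA P D) (a b : P) : Prop := V.e a * V.e b = V.e b

/-- `π_x(η)` exists for `η ∈ Ψ⁰`: `η = φ·ψ⁻¹` with `φ, ψ ∈ Ψ`,
`d(ψ) ≤ x ≤ d(φ)` and `δ(ψ) ≤ δ(φ)`. -/
def extProjDef (V : SVA P D) (η : P) (x : D) : Prop :=
  ∃ φ ψ, φ ∈ V.Psi ∧ ψ ∈ V.Psi ∧ η = φ * V.inv ψ ∧
    V.d ψ ≤ x ∧ x ≤ V.d φ ∧ V.domLe ψ φ

/-- The partially defined extension of projection to `Ψ⁰`: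
`π_x(φ·ψ⁻¹) = π_x(φ)·ψ⁻¹`. -/
noncomputable def extProj (V : SVA P D) (η : P) (x : D) : P :=
  letI := Classical.propDecidable (V.extProjDef η x)
  if h : V.extProjDef η x then V.p h.choose x * V.inv h.choose_spec.choose else η

/-- The conditional `φ_{x|y} = π_x(φ)·(π_y(φ))⁻¹`. -/
def condit (V : SVA P D) (φ : P) (x y : D) : P := V.p φ x * V.inv (V.p φ y)

/-- The compositional operator `φ ▷ ψ = φ·ψ·(π_{x∧y}(ψ))⁻¹`. -/
noncomputable def comp (V : SVA P D) (φ ψ : P) : P :=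
  φ * ψ * V.inv (V.extProj ψ (V.d φ ⊓ V.d ψ))

/-- An abstract density: all projections `π_z(η)`, `z ≤ d(η)`, exist. -/
def AbsDensity (V : SVA P D) (η : P) : Prop := ∀ z, z ≤ V.d η → V.extProjDef η z

end SVA

variable {P : Type*} {D : Type*} [CommSemigroup P] [DistribLattice D]


theorem SVA.d_extProj {P : Type*} {D : Type*} [CommSemigroup P] [Lattice D]
    (V : SVA P D) {η : P} {x : D} (h : V.extProjDef η x) :
    V.d (V.extProj η x) = x := by
  unfold SVA.extProj
  rw [dif_pos h]
  obtain ⟨hf, hg, heq, hxle, hlex, hdom⟩ := h.choose_spec.choose_spec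
  rw [V.d_mul, V.d_inv, V.d_p x hf hlex]
  exact sup_eq_left.mpr hxle

/-- Over a distributive lattice, composition is exchangeable: if `x ≥ y∧z` for
abstract densities `φ, ψ, τ` with `d(φ) = x`, `d(ψ) = y`, `d(τ) = z` and the
domination conditions hold, then `(φ ▷ ψ) ▷ τ = (φ ▷ τ) ▷ ψ`. -/
theorem SVA.comp_exchange (V : SVA P D) {φ ψ τ : P}
    (hφ : V.AbsDensity φ) (hψ : V.AbsDensity ψ) (hτ : V.AbsDensity τ)
    (hle : V.d ψ ⊓ V.d τ ≤ V.d φ)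
    (hdomψ : V.domLe (V.extProj ψ (V.d φ ⊓ V.d ψ)) (V.extProj φ (V.d φ ⊓ V.d ψ)))
    (hdomτ : V.domLe (V.extProj τ (V.d φ ⊓ V.d τ)) (V.extProj φ (V.d φ ⊓ V.d τ))) :
    V.comp (V.comp φ ψ) τ = V.comp (V.comp φ τ) ψ := by
  have hdψ : V.d (V.extProj ψ (V.d φ ⊓ V.d ψ)) = V.d φ ⊓ V.d ψ :=
    V.d_extProj (hψ _ inf_le_right)
  have hdτ : V.d (V.extProj τ (V.d φ ⊓ V.d τ)) = V.d φ ⊓ V.d τ :=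
    V.d_extProj (hτ _ inf_le_right)
  have hd1 : V.d (V.comp φ ψ) = V.d φ ⊔ V.d ψ := by
    rw [SVA.comp, V.d_mul, V.d_mul, V.d_inv, hdψ]
    exact sup_eq_left.mpr (le_trans inf_le_left le_sup_left)
  have hd2 : V.d (V.comp φ τ) = V.d φ ⊔ V.d τ := by
    rw [SVA.comp, V.d_mul, V.d_mul, V.d_inv, hdτ]
    exact sup_eq_left.mpr (le_trans inf_le_left le_sup_left)
  have key1 : (V.d φ ⊔ V.d ψ) ⊓ V.d τ = V.d φ ⊓ V.d τ := by
    rw [inf_sup_right]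
    exact sup_eq_left.mpr (le_inf hle inf_le_right)
  have key2 : (V.d φ ⊔ V.d τ) ⊓ V.d ψ = V.d φ ⊓ V.d ψ := by
    rw [inf_sup_right]
    refine sup_eq_left.mpr (le_inf ?_ inf_le_right)
    rw [inf_comm]; exact hle
  show V.comp φ ψ * τ * V.inv (V.extProj τ (V.d (V.comp φ ψ) ⊓ V.d τ))
      = V.comp φ τ * ψ * V.inv (V.extProj ψ (V.d (V.comp φ τ) ⊓ V.d ψ))
  rw [hd1, hd2, key1, key2, SVA.comp, SVA.comp]
  generalize V.inv (V.extProj ψ (V.d φ ⊓ V.d ψ)) = A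
  generalize V.inv (V.extProj τ (V.d φ ⊓ V.d τ)) = B
  simp only [mul_assoc, mul_comm, mul_left_comm]
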